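/- If f is a nonconstant entire function that is the locally uniform limit of a sequence of polynomials f_N, each of whose roots lie in a fixed closed convex set K ⊆ ℂ, then every zero of the derivative f' lies in K. -/

import Mathlib

open Filter Polynomial Metric Set

lemma eval_deriv_prod (w : ℂ) (s : Multiset ℂ) (hs : ∀ r ∈ s, w ≠ r) :
    ((s.map fun r => X - C r).prod.derivative.eval w)
      = ((s.map fun r => X - C r).prod.eval w) * (s.map fun r => (w - r)⁻¹).sum := by
  induction s using Multiset.induction with
  | empty => simp
  | cons r s ih =>
    have hwr : w - r ≠ 0 := sub_ne_zero.mpr (hs r (Multiset.mem_cons_self r s))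
    have ih' := ih (fun a ha => hs a (Multiset.mem_cons_of_mem ha))
    simp only [Multiset.map_cons, Multiset.prod_cons, Multiset.sum_cons, derivative_mul,
      derivative_sub, derivative_X, derivative_C, sub_zero, one_mul, eval_add, eval_mul,
      eval_sub, eval_X, eval_C, ih']
    field_simp

lemma deriv_ne_zero_outside (p : Polynomial ℂ) (a b : ℂ) (hab : p.eval a ≠ p.eval b)
    (K : Set ℂ) (hK : IsClosed K) (hKc : Convex ℝ K)
    (hroots : ∀ x : ℂ, p.eval x = 0 → x ∈ K) (w : ℂ) (hw : w ∉ K) :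
    p.derivative.eval w ≠ 0 := by
  have hp0 : p ≠ 0 := by rintro rfl; simp at hab
  have hdeg : 0 < p.natDegree := by
    rcases Nat.eq_zero_or_pos p.natDegree with h | h
    · exact absurd (by rw [eq_C_of_natDegree_eq_zero h]; simp) hab
    · exact h
  obtain ⟨φ, u, hφK, hφw⟩ := geometric_hahn_banach_closed_point hKc hK hw
  set c : ℂ := (φ 1 : ℝ) - (φ Complex.I : ℝ) * Complex.I with hc
  have hφ : ∀ v : ℂ, φ v = (c * v).re := by
    intro v
    have hv : v = (v.re : ℝ) • (1 : ℂ) + (v.im : ℝ) • Complex.I := by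
      apply Complex.ext <;> simp
    calc φ v = v.re * φ 1 + v.im * φ Complex.I := by
          conv_lhs => rw [hv]
          rw [map_add, map_smul, map_smul]; simp [smul_eq_mul]
      _ = (c * v).re := by
          simp only [hc, Complex.mul_re, Complex.sub_re, Complex.sub_im,
            Complex.mul_im, Complex.ofReal_re, Complex.ofReal_im, Complex.I_re, Complex.I_im]
          ring
  have hroot_mem : ∀ r ∈ p.roots, r ∈ K := fun r hr =>
    hroots r ((mem_roots hp0).mp hr)
  have hterm : ∀ r ∈ p.roots, 0 < (c * (w - r)).re := by
    intro r hr
    have h1 : φ r < u := hφK r (hroot_mem r hr)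
    have h2 : u < φ w := hφw
    have := sub_pos.mpr (h1.trans h2)
    rwa [hφ, hφ, ← Complex.sub_re, ← mul_sub] at this
  have hwr : ∀ r ∈ p.roots, w ≠ r := by
    intro r hr h; exact hw (h ▸ hroot_mem r hr)
  have hpw : p.eval w ≠ 0 := fun h => hw (hroots w h)
  set S : ℂ := (p.roots.map fun r => (w - r)⁻¹).sum with hS
  have key : ∀ r ∈ p.roots, 0 < (c * (starRingEnd ℂ) ((w - r)⁻¹)).re := by
    intro r hr
    have hne : (w - r) ≠ 0 := sub_ne_zero.mpr (hwr r hr)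
    have hrepr : c * (starRingEnd ℂ) ((w - r)⁻¹)
        = ((( Complex.normSq (w - r))⁻¹ : ℝ) : ℂ) * (c * (w - r)) := by
      rw [Complex.inv_def, map_mul, Complex.conj_conj, Complex.conj_ofReal]
      push_cast
      ring
    rw [hrepr, Complex.re_ofReal_mul]
    have h1 : 0 < Complex.normSq (w - r) := Complex.normSq_pos.mpr hne
    have h2 := hterm r hr
    positivity
  have hpos : 0 < (c * (starRingEnd ℂ) S).re := by
    have hcard : p.roots ≠ 0 := by
      have h := (Splits.natDegree_eq_card_roots (IsAlgClosed.splits p))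
      intro h0; rw [h0] at h; simp at h; omega
    obtain ⟨r0, hr0⟩ := Multiset.exists_mem_of_ne_zero hcard
    have hsum : (c * (starRingEnd ℂ) S).re
        = (p.roots.map fun r => (c * (starRingEnd ℂ) ((w - r)⁻¹)).re).sum := by
      rw [hS]
      induction p.roots using Multiset.induction with
      | empty => simp
      | cons r s ih =>
        simp only [Multiset.map_cons, Multiset.sum_cons, map_add, mul_add, Complex.add_re, ih]
    rw [hsum]
    calc (0:ℝ) < (c * (starRingEnd ℂ) ((w - r0)⁻¹)).re := key r0 hr0
      _ ≤ _ := by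
          conv_rhs => rw [← Multiset.cons_erase hr0]
          rw [Multiset.map_cons, Multiset.sum_cons]
          have : 0 ≤ ((p.roots.erase r0).map fun r => (c * (starRingEnd ℂ) ((w - r)⁻¹)).re).sum := by
            apply Multiset.sum_nonneg
            intro x hx
            obtain ⟨r, hr, rfl⟩ := Multiset.mem_map.mp hx
            exact (key r (Multiset.mem_of_mem_erase hr)).le
          linarith
  have hSne : S ≠ 0 := by
    intro h; rw [h] at hpos; simp at hpos
  have hid : p.derivative.eval w = p.eval w * S := by
    conv_lhs => rw [Splits.eq_prod_roots (IsAlgClosed.splits p)]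
    conv_rhs => rw [Splits.eq_prod_roots (IsAlgClosed.splits p)]
    rw [derivative_mul, derivative_C]
    simp only [zero_mul, zero_add, eval_mul, eval_C]
    rw [eval_deriv_prod w _ hwr, hS]
    ring
  rw [hid]
  exact mul_ne_zero hpw hSne

theorem gauss_lucas_limit_of_polynomials (f : ℂ → ℂ) (hf : Differentiable ℂ f)
    (hnc : ¬ ∃ c : ℂ, f = fun _ => c)
    (F : ℕ → Polynomial ℂ)
    (hconv : TendstoLocallyUniformly (fun N z => (F N).eval z) f atTop)
    (K : Set ℂ) (hK : IsClosed K) (hKc : Convex ℝ K)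
    (hroots : ∀ N : ℕ, ∀ z : ℂ, (F N).eval z = 0 → z ∈ K)
    (z : ℂ) (hz : deriv f z = 0) : z ∈ K := by
  by_contra hzK
  -- f is nonconstant: pick a b with f a ≠ f b
  have hab : ∃ a b : ℂ, f a ≠ f b := by
    by_contra h
    push_neg at h
    exact hnc ⟨f 0, funext fun x => h x 0⟩
  obtain ⟨a, b, hfab⟩ := hab
  have hconv' : TendstoLocallyUniformlyOn (fun N z => (F N).eval z) f atTop univ :=
    (tendstoLocallyUniformlyOn_univ).mpr hconv
  -- eventually F N is nonconstant
  have hne : ∀ᶠ N in atTop, (F N).eval a ≠ (F N).eval b := by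
    have hta : Tendsto (fun N => (F N).eval a) atTop (nhds (f a)) :=
      hconv'.tendsto_at (mem_univ a)
    have htb : Tendsto (fun N => (F N).eval b) atTop (nhds (f b)) :=
      hconv'.tendsto_at (mem_univ b)
    have h2 : f a - f b ≠ 0 := sub_ne_zero.mpr hfab
    filter_upwards [(hta.sub htb).eventually_ne h2] with N hN
    exact fun h => hN (by rw [h, sub_self])
  -- g := deriv f is entire, analytic, not identically zero
  set g : ℂ → ℂ := deriv f with hg
  have hfan : AnalyticOnNhd ℂ f univ := hf.differentiableOn.analyticOnNhd isOpen_univ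
  have hgan : AnalyticOnNhd ℂ g univ := hfan.deriv
  have hgd : Differentiable ℂ g := fun x => (hgan x (mem_univ x)).differentiableAt
  have hiso : ∀ᶠ w in nhdsWithin z {z}ᶜ, g w ≠ 0 := by
    rcases (hgan z (mem_univ z)).eventually_eq_zero_or_eventually_ne_zero with h | h
    · exfalso
      have h0 : EqOn g 0 univ :=
        hgan.eqOn_zero_of_preconnected_of_eventuallyEq_zero isPreconnected_univ (mem_univ z)
          (by filter_upwards [h] with w hw using hw)
      have hconst : ∀ x : ℂ, f x = f 0 := fun x =>
        is_const_of_deriv_eq_zero hf (fun y => h0 (mem_univ y)) x 0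
      exact hnc ⟨f 0, funext hconst⟩
    · exact h
  -- choose radius r
  obtain ⟨ε, hε, hεball⟩ := Metric.isOpen_iff.mp hK.isOpen_compl z hzK
  obtain ⟨ρ, hρ, hρball⟩ := Metric.mem_nhdsWithin_iff.mp hiso
  set r : ℝ := min ε ρ / 2 with hr
  have hr0 : 0 < r := by positivity
  have hmin : 0 < min ε ρ := lt_min hε hρ
  have hrε : r < ε := by simp only [hr]; linarith [min_le_left ε ρ]
  have hrρ : r < ρ := by simp only [hr]; linarith [min_le_right ε ρ]
  have hball_K : ∀ w ∈ closedBall z r, w ∉ K := by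
    intro w hw hwK
    exact hεball (lt_of_le_of_lt (mem_closedBall.mp hw) hrε) hwK
  have hsphere : ∀ w ∈ sphere z r, g w ≠ 0 := by
    intro w hw
    apply hρball
    refine ⟨mem_ball.mpr (lt_of_le_of_lt (le_of_eq (mem_sphere.mp hw)) hrρ), ?_⟩
    intro h
    simp only [mem_singleton_iff] at h
    subst h
    simp only [mem_sphere, dist_self] at hw
    exact hr0.ne' hw.symm
  -- minimum of ‖g‖ on the sphere
  have hcpt : IsCompact (sphere z r) := isCompact_sphere z r
  have hsne : (sphere z r).Nonempty := NormedSpace.sphere_nonempty.mpr hr0.le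
  obtain ⟨w0, hw0, hw0min⟩ := hcpt.exists_isMinOn hsne (hgd.continuous.norm.continuousOn)
  set m : ℝ := ‖g w0‖ with hm
  have hm0 : 0 < m := norm_pos_iff.mpr (hsphere w0 hw0)
  have hmle : ∀ w ∈ sphere z r, m ≤ ‖g w‖ := fun w hw => hw0min hw
  -- derivatives converge uniformly on the closed ball
  have hFd : ∀ᶠ N in atTop, DifferentiableOn ℂ (fun z => (F N).eval z) univ :=
    Eventually.of_forall fun N => (Polynomial.differentiable (F N)).differentiableOn
  have hderiv : TendstoLocallyUniformlyOn
      (deriv ∘ fun N z => (F N).eval z) (deriv f) atTop univ :=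
    hconv'.deriv hFd isOpen_univ
  have hunif : TendstoUniformlyOn (deriv ∘ fun N z => (F N).eval z) g atTop
      (closedBall z r) :=
    (tendstoLocallyUniformlyOn_iff_forall_isCompact isOpen_univ).mp hderiv
      (closedBall z r) (subset_univ _) (isCompact_closedBall z r)
  have hclose := Metric.tendstoUniformlyOn_iff.mp hunif (m / 2) (by positivity)
  obtain ⟨N, hNne, hNclose⟩ := (hne.and hclose).exists
  have hpderiv : ∀ w : ℂ, deriv (fun x => (F N).eval x) w = (F N).derivative.eval w :=
    fun w => Polynomial.deriv (p := F N)
  have hNclose' : ∀ w ∈ closedBall z r, dist (g w) ((F N).derivative.eval w) < m / 2 := by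
    intro w hw
    have h1 := hNclose w hw
    simpa only [Function.comp, hpderiv w] using h1
  have hnovanish : ∀ w ∈ closedBall z r, (F N).derivative.eval w ≠ 0 := fun w hw =>
    deriv_ne_zero_outside (F N) a b hNne K hK hKc (hroots N) w (hball_K w hw)
  -- on the sphere, m/2 ≤ ‖(F N)' w‖
  have hlower : ∀ w ∈ sphere z r, m / 2 ≤ ‖(F N).derivative.eval w‖ := by
    intro w hw
    have h1 := hNclose' w (sphere_subset_closedBall hw)
    rw [dist_eq_norm] at h1
    have h2 := hmle w hw
    linarith [(abs_le.mp (abs_norm_sub_norm_le (g w) ((F N).derivative.eval w))).1,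
      abs_norm_sub_norm_le (g w) ((F N).derivative.eval w), norm_sub_rev (g w) ((F N).derivative.eval w) ▸ h1,
      norm_sub_norm_le (g w) ((F N).derivative.eval w)]
  -- maximum modulus principle applied to the inverse
  have hmax : ‖((F N).derivative.eval z)⁻¹‖ ≤ 2 / m := by
    have hdc : DiffContOnCl ℂ (fun w => ((F N).derivative.eval w)⁻¹) (ball z r) := by
      refine ⟨DifferentiableOn.inv ((Polynomial.differentiable _).differentiableOn)
        (fun w hw => hnovanish w (ball_subset_closedBall hw)), ?_⟩
      rw [closure_ball z hr0.ne']
      exact ContinuousOn.inv₀ ((Polynomial.continuous _).continuousOn) hnovanish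
    have hfr : ∀ w ∈ frontier (ball z r), ‖((F N).derivative.eval w)⁻¹‖ ≤ 2 / m := by
      intro w hw
      rw [frontier_ball z hr0.ne'] at hw
      rw [norm_inv]
      calc ‖(F N).derivative.eval w‖⁻¹ ≤ (m / 2)⁻¹ := by
            apply inv_anti₀ (by positivity) (hlower w hw)
        _ = 2 / m := by rw [inv_div]
    exact Complex.norm_le_of_forall_mem_frontier_norm_le isBounded_ball hdc hfr
      (by rw [closure_ball z hr0.ne']; exact mem_closedBall_self hr0.le)
  -- contradiction
  have hzne : (F N).derivative.eval z ≠ 0 := hnovanish z (mem_closedBall_self hr0.le)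
  have hzsmall : ‖(F N).derivative.eval z‖ < m / 2 := by
    have h1 := hNclose' z (mem_closedBall_self hr0.le)
    have hgz : g z = 0 := hz
    rw [hgz, dist_eq_norm, zero_sub, norm_neg] at h1
    exact h1
  have hzbig : m / 2 ≤ ‖(F N).derivative.eval z‖ := by
    rw [norm_inv] at hmax
    have h3 : 0 < ‖(F N).derivative.eval z‖ := norm_pos_iff.mpr hzne
    have h4 : (0:ℝ) < ‖(F N).derivative.eval z‖⁻¹ := by positivity
    have h5 := inv_anti₀ h4 hmax
    rw [inv_inv, inv_div] at h5
    exact h5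
  linarith
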